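/- Let L be a lattice in which every nonempty upper bounded subset has a join, equipped with an order-preserving action of ℤ (written x + n) such that x < x + 1 for all x, and such that for all x, y in L there exists k ∈ ℕ with x - k ≤ y ≤ x + k. Define a graph X on the quotient L/ℤ with an edge between x, y when some representatives satisfy x₀ ≤ y₀ ≤ x₀ + 1. Then for any vertices x, y ∈ X and any representatives x₀, y₀ ∈ L, the graph distance satisfies d(x, y) = min{n ≥ 0 | ∃ k, h ∈ ℤ, x₀ + k ≤ y₀ + h ≤ x₀ + k + n}. -/

import Mathlib

open SimpleGraph

/-- The orbit relation of the `ℤ`-action on `L` generated by the order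
automorphism `T` (the action of `n` is `T ^ n`, written `x + n` in the paper). -/
def zOrbitRel {L : Type*} [Lattice L] (T : L ≃o L) (x y : L) : Prop :=
  ∃ k : ℤ, (T ^ k) x = y

/-- The graph `X` on the quotient `L/ℤ`, with an edge between two distinct classes `x, y`
whenever some representatives satisfy `x₀ ≤ y₀ ≤ x₀ + 1`. -/
def quotGraph {L : Type*} [Lattice L] (T : L ≃o L) : SimpleGraph (Quot (zOrbitRel T)) where
  Adj x y := x ≠ y ∧ ∃ x₀ y₀ : L, Quot.mk _ x₀ = x ∧ Quot.mk _ y₀ = y ∧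
    x₀ ≤ y₀ ∧ y₀ ≤ T x₀
  symm := by
    constructor
    rintro x y ⟨hne, x₀, y₀, hx, hy, h1, h2⟩
    refine ⟨hne.symm, y₀, T x₀, hy, ?_, h2, T.monotone h1⟩
    rw [← hx]
    exact (Quot.sound ⟨(1 : ℤ), by simp⟩).symm
  loopless := by constructor; rintro x ⟨hne, -⟩; exact hne rfl

lemma zpow_add_apply {L : Type*} [Lattice L] (T : L ≃o L) (a b : ℤ) (x : L) :
    (T ^ (a + b)) x = (T ^ a) ((T ^ b) x) := by
  rw [zpow_add]; rfl

lemma zOrbitRel_equiv {L : Type*} [Lattice L] (T : L ≃o L) : Equivalence (zOrbitRel T) := by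
  constructor
  · exact fun x => ⟨0, by simp⟩
  · rintro x y ⟨k, rfl⟩
    exact ⟨-k, by simp [zpow_neg, ← OrderIso.coe_trans]⟩
  · rintro x y z ⟨k, rfl⟩ ⟨l, rfl⟩
    refine ⟨k + l, ?_⟩
    rw [add_comm, zpow_add]; rfl

lemma zOrbitRel_of_mk_eq {L : Type*} [Lattice L] (T : L ≃o L) {x y : L}
    (h : Quot.mk (zOrbitRel T) x = Quot.mk (zOrbitRel T) y) : zOrbitRel T x y :=
  ((zOrbitRel_equiv T).eqvGen_iff).1 (Quot.eqvGen_exact h)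

lemma le_pow_self {L : Type*} [Lattice L] (T : L ≃o L) (hinc : ∀ x : L, x < T x) :
    ∀ (n : ℕ) (a : L), a ≤ (T ^ n) a := by
  intro n a
  induction n with
  | zero => simp
  | succ n ih =>
    calc a ≤ (T ^ n) a := ih
    _ ≤ (T ^ n) (T a) := ((T^n : L ≃o L)).monotone (hinc a).le
    _ = (T ^ (n+1)) a := by rw [pow_succ]; rfl

/-- From `a ≤ b ≤ T^n a` we can build a walk of length at most `n`. -/
lemma walk_of_between {L : Type*} [Lattice L] (T : L ≃o L) (hinc : ∀ x : L, x < T x) :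
    ∀ (n : ℕ) (a b : L), a ≤ b → b ≤ (T ^ n) a →
      ∃ p : (quotGraph T).Walk (Quot.mk _ a) (Quot.mk _ b), p.length ≤ n := by
  intro n
  induction n with
  | zero =>
    intro a b h1 h2
    simp only [pow_zero] at h2
    replace h2 : b ≤ a := h2
    obtain rfl : a = b := le_antisymm h1 h2
    exact ⟨Walk.nil, by simp⟩
  | succ n ih =>
    intro a b h1 h2
    set c := b ⊓ T a with hc
    have hac : a ≤ c := le_inf h1 (hinc a).le
    have hcTa : c ≤ T a := inf_le_right
    have hcb : c ≤ b := inf_le_left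
    have hbTc : b ≤ (T ^ n) c := by
      rw [hc, map_inf]
      refine le_inf (le_pow_self T hinc n b) ?_
      have : (T ^ n) (T a) = (T ^ (n+1)) a := by rw [pow_succ]; rfl
      rw [this]; exact h2
    obtain ⟨p, hp⟩ := ih c b hcb hbTc
    -- a walk of length ≤ 1 from mk a to mk c
    by_cases heq : Quot.mk (zOrbitRel T) a = Quot.mk (zOrbitRel T) c
    · rw [heq]
      exact ⟨p, hp.trans (Nat.le_succ n)⟩
    · have hadj : (quotGraph T).Adj (Quot.mk _ a) (Quot.mk _ c) :=
        ⟨heq, a, c, rfl, rfl, hac, hcTa⟩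
      exact ⟨Walk.cons hadj p, by simpa using Nat.succ_le_succ hp⟩

lemma mem_of_walk {L : Type*} [Lattice L] (T : L ≃o L)
    {u v : Quot (zOrbitRel T)} (p : (quotGraph T).Walk u v) :
    ∀ (x₀ y₀ : L), Quot.mk _ x₀ = u → Quot.mk _ y₀ = v →
      ∃ k h : ℤ, (T ^ k) x₀ ≤ (T ^ h) y₀ ∧ (T ^ h) y₀ ≤ (T ^ (k + p.length)) x₀ := by
  induction p with
  | nil =>
    intro x₀ y₀ hx hy
    obtain ⟨m, hm⟩ := zOrbitRel_of_mk_eq T (hx.trans hy.symm)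
    refine ⟨0, -m, ?_, ?_⟩ <;>
      simp [← hm, zpow_neg, ← OrderIso.coe_trans]
  | @cons u w v hadj q ih =>
    intro x₀ y₀ hx hy
    obtain ⟨-, x₁, x₁', hx₁, hx₁', hle1, hle2⟩ := hadj
    obtain ⟨k, h, h1, h2⟩ := ih x₁' y₀ hx₁' hy
    obtain ⟨m, hm⟩ := zOrbitRel_of_mk_eq T (hx₁.trans hx.symm)
    refine ⟨k - m, h, ?_, ?_⟩
    · have e : (T ^ (k - m)) x₀ = (T ^ k) x₁ := by
        rw [← hm, ← zpow_add_apply]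
        have : k - m + m = k := by ring
        rw [this]
      rw [e]
      exact le_trans ((T ^ k : L ≃o L).monotone hle1) h1
    · show (T ^ h) y₀ ≤ (T ^ (k - m + ((q.length : ℤ) + 1))) x₀
      have e : (T ^ (k - m + ((q.length : ℤ) + 1))) x₀ = (T ^ (k + q.length)) (T x₁) := by
        rw [← hm, ← zpow_add_apply]
        have : k - m + ((q.length : ℤ) + 1) + m = (k + q.length) + 1 := by ring
        rw [this, zpow_add_apply, zpow_one]
      rw [e]
      exact le_trans h2 ((T ^ (k + (q.length : ℤ)) : L ≃o L).monotone hle2)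

theorem quotGraph_dist_eq {L : Type*} [Lattice L] (T : L ≃o L)
    (hjoin : ∀ S : Set L, S.Nonempty → BddAbove S → ∃ j, IsLUB S j)
    (hinc : ∀ x : L, x < T x)
    (hcof : ∀ x y : L, ∃ k : ℕ, (T ^ (k : ℤ))⁻¹ x ≤ y ∧ y ≤ (T ^ (k : ℤ)) x)
    (x₀ y₀ : L) :
    (quotGraph T).dist (Quot.mk _ x₀) (Quot.mk _ y₀) =
      sInf {n : ℕ | ∃ k h : ℤ, (T ^ k) x₀ ≤ (T ^ h) y₀ ∧ (T ^ h) y₀ ≤ (T ^ (k + n)) x₀} := by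
  set S : Set ℕ := {n : ℕ | ∃ k h : ℤ, (T ^ k) x₀ ≤ (T ^ h) y₀ ∧ (T ^ h) y₀ ≤ (T ^ (k + n)) x₀}
    with hS
  have hSne : S.Nonempty := by
    obtain ⟨k, hk1, hk2⟩ := hcof x₀ y₀
    refine ⟨2 * k, -(k : ℤ), 0, ?_, ?_⟩
    · simpa [zpow_neg] using hk1
    · have : -(k : ℤ) + (2 * k : ℕ) = (k : ℤ) := by push_cast; ring
      rw [this]
      simpa using hk2
  obtain ⟨k, h, h1, h2⟩ := Nat.sInf_mem hSne
  have hxk : Quot.mk (zOrbitRel T) ((T ^ k) x₀) = Quot.mk (zOrbitRel T) x₀ :=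
    Quot.sound ⟨-k, by rw [← zpow_add_apply]; simp⟩
  have hyk : Quot.mk (zOrbitRel T) ((T ^ h) y₀) = Quot.mk (zOrbitRel T) y₀ :=
    Quot.sound ⟨-h, by rw [← zpow_add_apply]; simp⟩
  have hb : (T ^ h) y₀ ≤ (T ^ (sInf S)) ((T ^ k) x₀) := by
    have e : (T ^ (k + ((sInf S : ℕ) : ℤ))) x₀ = (T ^ (sInf S)) ((T ^ k) x₀) := by
      rw [add_comm, zpow_add_apply, zpow_natCast]
    rw [← e]
    exact h2
  obtain ⟨p, hp⟩ := walk_of_between T hinc (sInf S) _ _ h1 hb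
  have hdle : (quotGraph T).dist (Quot.mk _ x₀) (Quot.mk _ y₀) ≤ sInf S := by
    rw [← hxk, ← hyk]
    exact ((quotGraph T).dist_le p).trans hp
  refine le_antisymm hdle ?_
  have hreach : (quotGraph T).Reachable (Quot.mk _ x₀) (Quot.mk _ y₀) := by
    rw [← hxk, ← hyk]
    exact ⟨p⟩
  obtain ⟨q, hq⟩ := hreach.exists_walk_length_eq_dist
  refine Nat.sInf_le ?_
  rw [← hq]
  obtain ⟨k', h', c1, c2⟩ := mem_of_walk T q x₀ y₀ rfl rfl
  exact ⟨k', h', c1, c2⟩
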